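/- Let F₄ = F₂(ω) with ω² + ω + 1 = 0, and let φ : F₂[x,y,z] → F₄[t] be the F₂-algebra homomorphism determined by φ(x) = 1+t, φ(y) = 1+ωt, φ(z) = 1+ω²t. Then ker φ is exactly the ideal p = (1+x+y+z, 1+xy+yz+zx) of F₂[x,y,z]. -/
import Mathlib

open Polynomial

namespace Statement4Aux

noncomputable abbrev Kk : Type := GaloisField 2 2
abbrev Rr : Type := ZMod 2
abbrev Mm : Type := MvPolynomial (Fin 3) Rr

noncomputable def g1 : Mm := 1 + .X 0 + .X 1 + .X 2
noncomputable def g2 : Mm := 1 + .X 0 * .X 1 + .X 1 * .X 2 + .X 2 * .X 0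
noncomputable def Ss : Ideal Mm := Ideal.span {g1, g2}

noncomputable def ρ : Polynomial Rr →ₐ[Rr] Mm := Polynomial.aeval (MvPolynomial.X 0)

lemma htwoM : (2 : Mm) = 0 := by
  have : ((2:ℕ) : Mm) = 0 := CharP.cast_eq_zero _ 2
  exact_mod_cast this

lemma htwoK : (2 : Polynomial Kk) = 0 := by
  have : ((2:ℕ) : Polynomial Kk) = 0 := CharP.cast_eq_zero _ 2
  exact_mod_cast this

lemma htwoKK : (2 : Kk) = 0 := by
  have : ((2:ℕ) : Kk) = 0 := CharP.cast_eq_zero _ 2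
  exact_mod_cast this

lemma htwoR : (2 : Polynomial Rr) = 0 := by
  have : ((2:ℕ) : Polynomial Rr) = 0 := CharP.cast_eq_zero _ 2
  exact_mod_cast this

lemma g1_mem : g1 ∈ Ss := Ideal.subset_span (by left; rfl)
lemma g2_mem : g2 ∈ Ss := Ideal.subset_span (by right; rfl)

lemma ρ_X : ρ Polynomial.X = MvPolynomial.X 0 := by simp [ρ]

lemma key_y (A B : Mm) :
    MvPolynomial.X 1 * (A + MvPolynomial.X 1 * B) -
      ((MvPolynomial.X 0 ^ 2 + MvPolynomial.X 0 + 1) * B +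
        MvPolynomial.X 1 * (A + (MvPolynomial.X 0 + 1) * B)) ∈ Ss := by
  have h : MvPolynomial.X 1 * (A + MvPolynomial.X 1 * B) -
      ((MvPolynomial.X 0 ^ 2 + MvPolynomial.X 0 + 1) * B +
        MvPolynomial.X 1 * (A + (MvPolynomial.X 0 + 1) * B)) =
      B * (MvPolynomial.X 0 + MvPolynomial.X 1) * g1 + B * g2 := by
    unfold g1 g2
    linear_combination (-(B * (1 + MvPolynomial.X 1 + MvPolynomial.X 1 * MvPolynomial.X 2 +
      MvPolynomial.X 0 + MvPolynomial.X 0 * MvPolynomial.X 2 +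
      2 * (MvPolynomial.X 0 * MvPolynomial.X 1) + MvPolynomial.X 0 ^ 2))) * htwoM
  rw [h]
  exact Ideal.add_mem _ (Ideal.mul_mem_left _ _ g1_mem) (Ideal.mul_mem_left _ _ g2_mem)

lemma key_z (A B : Mm) :
    MvPolynomial.X 2 * (A + MvPolynomial.X 1 * B) -
      (((MvPolynomial.X 0 + 1) * A + (MvPolynomial.X 0 ^ 2 + MvPolynomial.X 0 + 1) * B) +
        MvPolynomial.X 1 * A) ∈ Ss := by
  have h : MvPolynomial.X 2 * (A + MvPolynomial.X 1 * B) -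
      (((MvPolynomial.X 0 + 1) * A + (MvPolynomial.X 0 ^ 2 + MvPolynomial.X 0 + 1) * B) +
        MvPolynomial.X 1 * A) =
      (A + MvPolynomial.X 1 * B + B * (MvPolynomial.X 0 + MvPolynomial.X 1)) * g1 + B * g2 := by
    unfold g1 g2
    linear_combination (-(B + A + MvPolynomial.X 1 * B + MvPolynomial.X 1 * A +
      MvPolynomial.X 1 * MvPolynomial.X 2 * B + MvPolynomial.X 1 ^ 2 * B +
      MvPolynomial.X 0 * B + MvPolynomial.X 0 * A + MvPolynomial.X 0 * MvPolynomial.X 2 * B +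
      2 * (MvPolynomial.X 0 * MvPolynomial.X 1 * B) + MvPolynomial.X 0 ^ 2 * B)) * htwoM
  rw [h]
  exact Ideal.add_mem _ (Ideal.mul_mem_left _ _ g1_mem) (Ideal.mul_mem_left _ _ g2_mem)

lemma normal_form (f : Mm) :
    ∃ a b : Polynomial Rr, f - (ρ a + MvPolynomial.X 1 * ρ b) ∈ Ss := by
  induction f using MvPolynomial.induction_on with
  | C r =>
      refine ⟨Polynomial.C r, 0, ?_⟩
      simp [ρ, MvPolynomial.algebraMap_eq]
  | add p q hp hq =>
      obtain ⟨a, b, h⟩ := hp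
      obtain ⟨c, d, h'⟩ := hq
      refine ⟨a + c, b + d, ?_⟩
      have e : (p + q) - (ρ (a + c) + MvPolynomial.X 1 * ρ (b + d)) =
          (p - (ρ a + MvPolynomial.X 1 * ρ b)) + (q - (ρ c + MvPolynomial.X 1 * ρ d)) := by
        simp only [map_add]; ring
      rw [e]; exact Ideal.add_mem _ h h'
  | mul_X p i hp =>
      obtain ⟨a, b, h⟩ := hp
      fin_cases i
      · refine ⟨Polynomial.X * a, Polynomial.X * b, ?_⟩
        show p * MvPolynomial.X 0 - (ρ (Polynomial.X * a) + MvPolynomial.X 1 * ρ (Polynomial.X * b)) ∈ Ss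
        have e : p * MvPolynomial.X 0 - (ρ (Polynomial.X * a) + MvPolynomial.X 1 * ρ (Polynomial.X * b)) =
            (p - (ρ a + MvPolynomial.X 1 * ρ b)) * MvPolynomial.X 0 := by
          simp only [map_mul, ρ_X]; ring
        rw [e]; exact Ideal.mul_mem_right _ _ h
      · refine ⟨(Polynomial.X ^ 2 + Polynomial.X + 1) * b, a + (Polynomial.X + 1) * b, ?_⟩
        show p * MvPolynomial.X 1 - (ρ ((Polynomial.X ^ 2 + Polynomial.X + 1) * b) + MvPolynomial.X 1 * ρ (a + (Polynomial.X + 1) * b)) ∈ Ss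
        have e : p * MvPolynomial.X 1 -
            (ρ ((Polynomial.X ^ 2 + Polynomial.X + 1) * b) +
              MvPolynomial.X 1 * ρ (a + (Polynomial.X + 1) * b)) =
            (p - (ρ a + MvPolynomial.X 1 * ρ b)) * MvPolynomial.X 1 +
            (MvPolynomial.X 1 * (ρ a + MvPolynomial.X 1 * ρ b) -
              ((MvPolynomial.X 0 ^ 2 + MvPolynomial.X 0 + 1) * ρ b +
                MvPolynomial.X 1 * (ρ a + (MvPolynomial.X 0 + 1) * ρ b))) := by
          simp only [map_mul, map_add, map_pow, map_one, ρ_X]; ring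
        rw [e]
        exact Ideal.add_mem _ (Ideal.mul_mem_right _ _ h) (key_y _ _)
      · refine ⟨(Polynomial.X + 1) * a + (Polynomial.X ^ 2 + Polynomial.X + 1) * b, a, ?_⟩
        show p * MvPolynomial.X 2 - (ρ ((Polynomial.X + 1) * a + (Polynomial.X ^ 2 + Polynomial.X + 1) * b) + MvPolynomial.X 1 * ρ a) ∈ Ss
        have e : p * MvPolynomial.X 2 -
            (ρ ((Polynomial.X + 1) * a + (Polynomial.X ^ 2 + Polynomial.X + 1) * b) +
              MvPolynomial.X 1 * ρ a) =
            (p - (ρ a + MvPolynomial.X 1 * ρ b)) * MvPolynomial.X 2 +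
            (MvPolynomial.X 2 * (ρ a + MvPolynomial.X 1 * ρ b) -
              (((MvPolynomial.X 0 + 1) * ρ a + (MvPolynomial.X 0 ^ 2 + MvPolynomial.X 0 + 1) * ρ b) +
                MvPolynomial.X 1 * ρ a)) := by
          simp only [map_mul, map_add, map_pow, map_one, ρ_X]; ring
        rw [e]
        exact Ideal.add_mem _ (Ideal.mul_mem_right _ _ h) (key_z _ _)

lemma key_inj (ω : Kk) (hω : ω ^ 2 + ω + 1 = 0) (U V : Polynomial Rr)
    (h : U.map (algebraMap Rr Kk) + (1 + C ω * X) * V.map (algebraMap Rr Kk) = 0) :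
    U = 0 ∧ V = 0 := by
  set i := algebraMap Rr Kk with hi_def
  have hi : Function.Injective i := (algebraMap Rr Kk).injective
  have hω0 : ω ≠ 0 := by
    rintro rfl; simp at hω
  have hω1 : ω ≠ 1 := by
    rintro rfl
    have h1 : (1 : Kk) = 0 := by linear_combination hω - htwoKK
    exact one_ne_zero h1
  have h' : U.map i + V.map i + C ω * (X * V.map i) = 0 := by linear_combination h
  have hzmod : ∀ w : ZMod 2, w = 0 ∨ w = 1 := by decide
  have step : ∀ n, i (U.coeff n + V.coeff n) + ω * (X * V.map i).coeff n = 0 := by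
    intro n
    have := congrArg (fun p => Polynomial.coeff p n) h'
    simpa [coeff_C_mul, map_add] using this
  have hV : V = 0 := by
    ext n
    have e := step (n + 1)
    rw [coeff_X_mul, coeff_map] at e
    rcases hzmod (V.coeff n) with hr | hr
    · simp [hr]
    · exfalso
      rw [hr, map_one, mul_one] at e
      rcases hzmod (U.coeff (n+1) + V.coeff (n+1)) with hs | hs
      · rw [hs, map_zero, zero_add] at e; exact hω0 e
      · rw [hs, map_one] at e
        exact hω1 (by linear_combination e - htwoKK)
  have hU : U.map i = 0 := by
    rw [hV] at h'; simpa using h'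
  exact ⟨(Polynomial.map_injective i hi) (by simpa using hU), hV⟩

noncomputable def φω (ω : Kk) : Mm →ₐ[Rr] Polynomial Kk :=
  MvPolynomial.aeval (fun i : Fin 3 => ![1 + X, 1 + C ω * X, 1 + C (ω ^ 2) * X] i)

lemma hωC (ω : Kk) (hω : ω ^ 2 + ω + 1 = 0) :
    (C ω : Polynomial Kk) ^ 2 + C ω + 1 = 0 := by
  have := congrArg (C : Kk →+* Polynomial Kk) hω
  simpa [map_add, map_pow] using this

lemma φ_g1 (ω : Kk) (hω : ω ^ 2 + ω + 1 = 0) : φω ω g1 = 0 := by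
  simp only [g1, φω, map_add, map_one, MvPolynomial.aeval_X]
  simp only [Matrix.cons_val_zero, Matrix.cons_val_one, Matrix.head_cons, Matrix.cons_val_two,
    Matrix.tail_cons, map_pow]
  linear_combination X * hωC ω hω + 2 * htwoK

lemma φ_g2 (ω : Kk) (hω : ω ^ 2 + ω + 1 = 0) : φω ω g2 = 0 := by
  simp only [g2, φω, map_add, map_one, map_mul, MvPolynomial.aeval_X]
  simp only [Matrix.cons_val_zero, Matrix.cons_val_one, Matrix.head_cons, Matrix.cons_val_two,
    Matrix.tail_cons, map_pow]
  linear_combination (2 * X + C ω * X ^ 2) * hωC ω hω + 2 * htwoK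

lemma aeval_comp (u : Polynomial Rr) :
    Polynomial.aeval (1 + X : Polynomial Kk) u
      = (u.comp (1 + X)).map (algebraMap Rr Kk) := by
  rw [Polynomial.map_comp, Polynomial.aeval_def, Polynomial.comp, Polynomial.eval₂_map]
  simp [Polynomial.map_add]
  rfl

lemma comp_invol (u : Polynomial Rr) (h : u.comp (1 + X) = 0) : u = 0 := by
  have : (u.comp (1 + X)).comp (1 + X) = u := by
    rw [Polynomial.comp_assoc]
    have e : ((1 : Polynomial Rr) + X).comp (1 + X) = X := by
      simp [Polynomial.add_comp]
      linear_combination htwoR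
    rw [e, Polynomial.comp_X]
  rw [h] at this
  simpa using this.symm

lemma φ_ρ (ω : Kk) (c : Polynomial Rr) :
    φω ω (ρ c) = Polynomial.aeval (1 + X : Polynomial Kk) c := by
  have hx : φω ω (MvPolynomial.X 0) = 1 + X := by
    simp [φω]
  simp only [ρ]
  rw [← Polynomial.aeval_algHom_apply, hx]

lemma φ_X1 (ω : Kk) : φω ω (MvPolynomial.X 1) = 1 + C ω * X := by
  simp [φω]

lemma Ss_le_ker (ω : Kk) (hω : ω ^ 2 + ω + 1 = 0) :
    Ss ≤ RingHom.ker (φω ω).toRingHom := by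
  rw [Ss, Ideal.span_le]
  rintro f (rfl | rfl)
  · simpa [RingHom.mem_ker] using φ_g1 ω hω
  · simpa [RingHom.mem_ker] using φ_g2 ω hω

end Statement4Aux

open Statement4Aux in
/-- Let `ω ∈ F₄` with `ω² + ω + 1 = 0`, and let `φ : F₂[x,y,z] → F₄[t]` be the
`F₂`-algebra homomorphism with `φ(x) = 1+t`, `φ(y) = 1+ωt`, `φ(z) = 1+ω²t`.
Then `ker φ = (1+x+y+z, 1+xy+yz+zx)`. -/
theorem statement_4 (ω : GaloisField 2 2) (hω : ω ^ 2 + ω + 1 = 0) :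
    RingHom.ker (MvPolynomial.aeval (R := ZMod 2)
        (fun i : Fin 3 =>
          ![1 + (Polynomial.X : Polynomial (GaloisField 2 2)),
            1 + Polynomial.C ω * Polynomial.X,
            1 + Polynomial.C (ω ^ 2) * Polynomial.X] i)).toRingHom =
    Ideal.span
      {1 + MvPolynomial.X 0 + MvPolynomial.X 1 + MvPolynomial.X 2,
       1 + MvPolynomial.X 0 * MvPolynomial.X 1 + MvPolynomial.X 1 * MvPolynomial.X 2 +
         MvPolynomial.X 2 * MvPolynomial.X 0} := by
  show RingHom.ker (φω ω).toRingHom = Ss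
  ext f
  constructor
  · intro hf
    rw [RingHom.mem_ker] at hf
    have hf' : φω ω f = 0 := hf
    obtain ⟨a, b, hmem⟩ := normal_form f
    have hS0 : φω ω (f - (ρ a + MvPolynomial.X 1 * ρ b)) = 0 := by
      have := Ss_le_ker ω hω hmem
      rwa [RingHom.mem_ker] at this
    have he : Polynomial.aeval (1 + X : Polynomial Kk) a +
        (1 + C ω * X) * Polynomial.aeval (1 + X : Polynomial Kk) b = 0 := by
      have h1 := hS0
      rw [map_sub, hf', zero_sub, neg_eq_zero, map_add, map_mul, φ_ρ, φ_ρ, φ_X1] at h1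
      exact h1
    rw [aeval_comp, aeval_comp] at he
    obtain ⟨hU, hV⟩ := key_inj ω hω _ _ he
    have ha : a = 0 := comp_invol _ hU
    have hb : b = 0 := comp_invol _ hV
    rw [ha, hb] at hmem
    simpa using hmem
  · intro hf
    exact Ss_le_ker ω hω hf
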